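/- Let b₀ ∈ (−p/α,∞) and let u̅, u̲ : [−p/α,∞) → [0,∞) be continuous on [−p/α,∞), locally Lipschitz on (−p/α,∞), each satisfying a linear growth bound (there exist constants c₁, c₂ with u(x) ≤ c₁·x + c₂ for all x ≥ −p/α), such that u̅ is a viscosity super-solution and u̲ is a viscosity sub-solution of the HJB equation on (b₀,∞). If u̲(x) ≤ u̅(x) for all x ∈ [−p/α, b₀], then u̲(x) ≤ u̅(x) for all x ≥ −p/α. -/

import Mathlib

open MeasureTheory Set Filter

noncomputable section

/-- Drift coefficient: c(x) = p + r x for x ≥ 0, c(x) = p + α x for x < 0. -/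
def drift (p r a x : ℝ) : ℝ := if 0 ≤ x then p + r * x else p + a * x

/-- I_v(x) = ∫_{(0, x+p/α]} v(x−u) dμ(u). -/
def Iop (p a : ℝ) (mu : Measure ℝ) (v : ℝ → ℝ) (x : ℝ) : ℝ :=
  ∫ u in Set.Ioc (0 : ℝ) (x + p / a), v (x - u) ∂mu

/-- L_{v,φ}(x) = c(x)·φ′(x) − (λ+δ)·v(x) + λ·I_v(x). -/
def Lphi (p lam d r a : ℝ) (mu : Measure ℝ) (v phi : ℝ → ℝ) (x : ℝ) : ℝ :=
  drift p r a x * deriv phi x - (lam + d) * v x + lam * Iop p a mu v x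

/-- G_v(x) = c(x) − (λ+δ)·v(x) + λ·I_v(x). -/
def Gop (p lam d r a : ℝ) (mu : Measure ℝ) (v : ℝ → ℝ) (x : ℝ) : ℝ :=
  drift p r a x - (lam + d) * v x + lam * Iop p a mu v x

/-- Viscosity sub-solution of the HJB equation on J ⊆ (−p/α,∞). -/
def IsViscSubsol (p lam d r a : ℝ) (mu : Measure ℝ) (u : ℝ → ℝ) (J : Set ℝ) : Prop :=
  ∀ x ∈ J, ∀ phi : ℝ → ℝ, ContDiff ℝ 1 phi → phi x = u x →
    (∀ y ∈ Set.Ici (-(p / a)), u y - phi y ≤ u x - phi x) →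
    0 ≤ max (1 - deriv phi x) (Lphi p lam d r a mu u phi x)

/-- Viscosity super-solution of the HJB equation on J ⊆ (−p/α,∞). -/
def IsViscSupersol (p lam d r a : ℝ) (mu : Measure ℝ) (u : ℝ → ℝ) (J : Set ℝ) : Prop :=
  ∀ x ∈ J, ∀ phi : ℝ → ℝ, ContDiff ℝ 1 phi → phi x = u x →
    (∀ y ∈ Set.Ici (-(p / a)), u x - phi x ≤ u y - phi y) →
    max (1 - deriv phi x) (Lphi p lam d r a mu u phi x) ≤ 0

/-- Viscosity solution: both sub- and super-solution. -/
def IsViscSol (p lam d r a : ℝ) (mu : Measure ℝ) (u : ℝ → ℝ) (J : Set ℝ) : Prop :=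
  IsViscSubsol p lam d r a mu u J ∧ IsViscSupersol p lam d r a mu u J

/-- Locally Lipschitz on a set. -/
def LocLipOn (s : Set ℝ) (u : ℝ → ℝ) : Prop :=
  ∀ x ∈ s, ∃ K : NNReal, ∃ eps : ℝ, 0 < eps ∧ LipschitzOnWith K u (s ∩ Metric.ball x eps)

/-- Linear growth bound on [−p/α,∞). -/
def LinGrowth (p a : ℝ) (u : ℝ → ℝ) : Prop :=
  ∃ c₁ c₂ : ℝ, ∀ x : ℝ, -(p / a) ≤ x → u x ≤ c₁ * x + c₂

/-- Standard value-function candidate. -/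
structure IsCandidate (p lam d r a : ℝ) (mu : Measure ℝ) (V : ℝ → ℝ) : Prop where
  cont : ContinuousOn V (Set.Ici (-(p / a)))
  nonneg : ∀ x ∈ Set.Ici (-(p / a)), 0 ≤ V x
  mono : MonotoneOn V (Set.Ici (-(p / a)))
  boundary : V (-(p / a)) = 0
  slope : ∀ x y : ℝ, -(p / a) ≤ x → x ≤ y → y - x ≤ V y - V x
  growth : ∀ x : ℝ, 0 ≤ x → V x ≤ (d * x + p) / (d - r) + p / a
  locLip : LocLipOn (Set.Ioi (-(p / a))) V
  visc : IsViscSol p lam d r a mu V (Set.Ioi (-(p / a)))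
  derivLim : ∀ x ∈ Set.Ioi (-(p / a)), ∀ (h : ℕ → ℝ) (dd : ℝ),
      ((∀ n, 0 < h n) ∨ (∀ n, h n < 0)) →
      Filter.Tendsto h Filter.atTop (nhds 0) →
      Filter.Tendsto (fun n => (V (x + h n) - V x) / h n) Filter.atTop (nhds dd) →
      1 ≤ dd ∧ dd * drift p r a x - (lam + d) * V x + lam * Iop p a mu V x ≤ 0

/-- The set A = {x ∈ [−p/α,∞) : G_V(x) = 0}. -/
def setA (p lam d r a : ℝ) (mu : Measure ℝ) (V : ℝ → ℝ) : Set ℝ :=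
  {x | x ∈ Set.Ici (-(p / a)) ∧ Gop p lam d r a mu V x = 0}

/-- The set B = {x ∈ [−p/α,∞) : V′(x) exists, V′(x) = 1 and G_V(x) < 0}. -/
def setB (p lam d r a : ℝ) (mu : Measure ℝ) (V : ℝ → ℝ) : Set ℝ :=
  {x | x ∈ Set.Ici (-(p / a)) ∧ DifferentiableAt ℝ V x ∧ deriv V x = 1 ∧
      Gop p lam d r a mu V x < 0}

/-- The set C = [−p/α,∞) \ (A ∪ B). -/
def setC (p lam d r a : ℝ) (mu : Measure ℝ) (V : ℝ → ℝ) : Set ℝ :=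
  Set.Ici (-(p / a)) \ (setA p lam d r a mu V ∪ setB p lam d r a mu V)


lemma drift_mono (p r a : ℝ) (hr : 0 < r) (ha : 0 < a) :
    Monotone (drift p r a) := by
  intro x y hxy
  unfold drift
  by_cases hx : 0 ≤ x
  · rw [if_pos hx, if_pos (le_trans hx hxy)]
    nlinarith
  · rw [if_neg hx]
    push_neg at hx
    by_cases hy : 0 ≤ y
    · rw [if_pos hy]; nlinarith
    · rw [if_neg hy]; push_neg at hy; nlinarith

lemma drift_le (p r a : ℝ) (hp : 0 < p) (hr : 0 < r) (ha : 0 < a)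
    (x : ℝ) (hx : -(p / a) ≤ x) :
    drift p r a x ≤ p + r * (x - (-(p / a) - 1)) := by
  have hpa : 0 < p / a := div_pos hp ha
  unfold drift
  split_ifs with h
  · nlinarith
  · push_neg at h
    have h1 : 0 ≤ x + p / a := by linarith
    nlinarith

def auxg (β m s x : ℝ) : ℝ := ((x - m) ^ 2 + s) ^ (β / 2)

def auxgd (β m s x : ℝ) : ℝ := (2 * (x - m)) * (β / 2) * ((x - m) ^ 2 + s) ^ (β / 2 - 1)

lemma auxW_pos (m s : ℝ) (hs : 0 < s) (x : ℝ) : 0 < (x - m) ^ 2 + s := by positivity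

lemma auxg_hasDerivAt (β m s : ℝ) (hs : 0 < s) (x : ℝ) :
    HasDerivAt (auxg β m s) (auxgd β m s x) x := by
  have hWd : HasDerivAt (fun y : ℝ => (y - m) ^ 2 + s) (2 * (x - m)) x := by
    have h1 : HasDerivAt (fun y : ℝ => (y - m) ^ 2 + s) ((2:ℕ) * (x - m) ^ (2-1) * 1) x :=
      (((hasDerivAt_id x).sub_const m).pow 2).add_const s
    convert h1 using 1
    push_cast
    ring
  exact hWd.rpow_const (Or.inl (auxW_pos m s hs x).ne')

lemma auxg_contDiff (β m s : ℝ) (hs : 0 < s) : ContDiff ℝ 1 (auxg β m s) := by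
  rw [contDiff_iff_contDiffAt]
  intro x
  have hWc : ContDiffAt ℝ 1 (fun y : ℝ => (y - m) ^ 2 + s) x :=
    (((contDiff_id.sub contDiff_const).pow 2).add contDiff_const).contDiffAt
  exact hWc.rpow_const_of_ne (auxW_pos m s hs x).ne'

lemma auxg_nonneg (β m s : ℝ) (hs : 0 < s) (x : ℝ) : 0 ≤ auxg β m s x :=
  Real.rpow_nonneg (auxW_pos m s hs x).le _

lemma auxg_pos (β m s : ℝ) (hs : 0 < s) (x : ℝ) : 0 < auxg β m s x :=
  Real.rpow_pos_of_pos (auxW_pos m s hs x) _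

lemma auxg_mono (β m s : ℝ) (hs : 0 < s) (hβ : 0 < β) (x' x : ℝ)
    (h1 : m ≤ x') (h2 : x' ≤ x) : auxg β m s x' ≤ auxg β m s x := by
  unfold auxg
  apply Real.rpow_le_rpow (auxW_pos m s hs x').le _ (by linarith)
  nlinarith

lemma auxgd_pos (β m s : ℝ) (hs : 0 < s) (hβ : 0 < β) (x : ℝ) (hx : m < x) :
    0 < auxgd β m s x := by
  unfold auxgd
  have h2 : (0:ℝ) < ((x - m) ^ 2 + s) ^ (β / 2 - 1) :=
    Real.rpow_pos_of_pos (auxW_pos m s hs x) _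
  have h3 : 0 < x - m := by linarith
  positivity

lemma auxg_split (β m s : ℝ) (hs : 0 < s) (x : ℝ) :
    ((x - m) ^ 2 + s) * ((x - m) ^ 2 + s) ^ (β / 2 - 1) = auxg β m s x := by
  have h := Real.rpow_add_one (auxW_pos m s hs x).ne' (β / 2 - 1)
  rw [show β / 2 - 1 + 1 = β / 2 by ring] at h
  unfold auxg
  rw [h]
  ring

/-- Existence of the smooth superlinear strict supersolution weight `g`. -/
lemma exists_g (p r a d : ℝ) (hp : 0 < p) (hr : 0 < r) (ha : 0 < a) (hrd : r < d) :
    ∃ g gd : ℝ → ℝ,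
      ContDiff ℝ 1 g ∧
      (∀ x, HasDerivAt g (gd x) x) ∧
      (∀ x, -(p / a) ≤ x → 0 < gd x) ∧
      (∀ x, 0 ≤ g x) ∧
      (∀ x' x : ℝ, -(p / a) ≤ x' → x' ≤ x → g x' ≤ g x) ∧
      (∀ x, -(p / a) ≤ x → drift p r a x * gd x ≤ d * g x) ∧
      (∀ c₁ c₂ C ε : ℝ, 0 < ε → ∃ R, 0 ≤ R ∧ ∀ x, R ≤ x → c₁ * x + c₂ - ε * g x < C) := by
  have hd : 0 < d := hr.trans hrd
  set β : ℝ := min 2 ((1 + d / r) / 2) with hβdef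
  have hdr1 : 1 < d / r := (one_lt_div hr).mpr hrd
  have hβ1 : 1 < β := lt_min (by norm_num) (by linarith)
  have hβr : β * r < d := by
    have h1 : β ≤ (1 + d / r) / 2 := min_le_right _ _
    have h2 : β * r ≤ ((1 + d / r) / 2) * r := by nlinarith
    have h3 : ((1 + d / r) / 2) * r = (r + d) / 2 := by field_simp
    rw [h3] at h2
    linarith
  have hβpos : 0 < β := by linarith
  clear_value β
  set m : ℝ := -(p / a) - 1 with hmdef
  have hD : 0 < d - β * r := by linarith
  set s : ℝ := (β * p) ^ 2 / (4 * (d - β * r) * d) + 1 with hsdef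
  have hs1 : 1 ≤ s := by
    rw [hsdef]
    have : 0 ≤ (β * p) ^ 2 / (4 * (d - β * r) * d) := by positivity
    linarith
  have hs0 : 0 < s := by linarith
  have hs4 : 4 * (d - β * r) * d * s = (β * p) ^ 2 + 4 * (d - β * r) * d := by
    rw [hsdef]
    field_simp
  clear_value s
  have hz1 : ∀ x : ℝ, -(p / a) ≤ x → 1 ≤ x - m := by
    intro x hx; rw [hmdef]; linarith
  clear_value m
  refine ⟨auxg β m s, auxgd β m s, auxg_contDiff β m s hs0,
    fun x => auxg_hasDerivAt β m s hs0 x, ?_, fun x => auxg_nonneg β m s hs0 x, ?_, ?_, ?_⟩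
  · intro x hx
    exact auxgd_pos β m s hs0 hβpos x (by linarith [hz1 x hx])
  · intro x' x hx' hxx
    exact auxg_mono β m s hs0 hβpos x' x (by linarith [hz1 x' hx']) hxx
  · -- design inequality
    intro x hx
    have h1 := hz1 x hx
    have hdb : drift p r a x ≤ p + r * (x - m) := by
      have := drift_le p r a hp hr ha x hx
      rw [hmdef]; exact this
    have hWpos := auxW_pos m s hs0 x
    have hWpow : (0:ℝ) ≤ ((x - m) ^ 2 + s) ^ (β / 2 - 1) := (Real.rpow_pos_of_pos hWpos _).le
    have hkey : drift p r a x * ((2 * (x - m)) * (β / 2)) ≤ d * ((x - m) ^ 2 + s) := by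
      have hβz : 0 ≤ (2 * (x - m)) * (β / 2) := by nlinarith
      have step1 : drift p r a x * ((2 * (x - m)) * (β / 2))
          ≤ (p + r * (x - m)) * ((2 * (x - m)) * (β / 2)) :=
        mul_le_mul_of_nonneg_right hdb hβz
      have key4 : 4 * (d - β * r) * (d * ((x - m) ^ 2 + s)
            - (p + r * (x - m)) * ((2 * (x - m)) * (β / 2)))
          = (2 * (d - β * r) * (x - m) - β * p) ^ 2 + 4 * (d - β * r) * d := by
        linear_combination hs4
      nlinarith [sq_nonneg (2 * (d - β * r) * (x - m) - β * p), mul_pos hD hd]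
    calc drift p r a x * auxgd β m s x
        = (drift p r a x * ((2 * (x - m)) * (β / 2))) * ((x - m) ^ 2 + s) ^ (β / 2 - 1) := by
          unfold auxgd; ring
      _ ≤ (d * ((x - m) ^ 2 + s)) * ((x - m) ^ 2 + s) ^ (β / 2 - 1) :=
          mul_le_mul_of_nonneg_right hkey hWpow
      _ = d * (((x - m) ^ 2 + s) * ((x - m) ^ 2 + s) ^ (β / 2 - 1)) := by ring
      _ = d * auxg β m s x := by rw [auxg_split β m s hs0 x]
  · -- growth
    intro c₁ c₂ C ε hε
    set L : ℝ := |c₁| + 1 with hLdef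
    have hL : 0 < L := by positivity
    have hLc : c₁ + 1 ≤ L := by
      have := le_abs_self c₁; rw [hLdef]; linarith
    clear_value L
    set T : ℝ := max 1 ((L / ε) ^ (β - 1)⁻¹) with hTdef
    have hT1 : 1 ≤ T := le_max_left _ _
    have hTpow : L / ε ≤ T ^ (β - 1) := by
      have hLε : 0 ≤ L / ε := by positivity
      have h1 : (L / ε) ^ (β - 1)⁻¹ ≤ T := le_max_right _ _
      have h2 : ((L / ε) ^ (β - 1)⁻¹) ^ (β - 1) ≤ T ^ (β - 1) :=
        Real.rpow_le_rpow (Real.rpow_nonneg hLε _) h1 (by linarith)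
      have h3 : ((L / ε) ^ (β - 1)⁻¹) ^ (β - 1) = L / ε := by
        rw [← Real.rpow_mul hLε, inv_mul_cancel₀ (by linarith : β - 1 ≠ 0), Real.rpow_one]
      linarith [h3 ▸ h2]
    clear_value T
    refine ⟨max (max (m + T) 0) (c₂ - C + 1), le_trans (le_max_right _ _) (le_max_left _ _), ?_⟩
    intro x hx
    have hx0 : 0 ≤ x := le_trans (le_trans (le_max_right _ _) (le_max_left _ _)) hx
    have hxT : m + T ≤ x := le_trans (le_trans (le_max_left _ _) (le_max_left _ _)) hx
    have hxC : c₂ - C + 1 ≤ x := le_trans (le_max_right _ _) hx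
    have hzT : T ≤ x - m := by linarith
    have hz0 : 0 < x - m := by linarith
    -- ε * g x ≥ L * (x - m)
    have h12 : (x - m) ^ β ≤ auxg β m s x := by
      have e0 : ((x - m) ^ 2 : ℝ) ^ (β / 2) ≤ ((x - m) ^ 2 + s) ^ (β / 2) :=
        Real.rpow_le_rpow (by positivity) (by linarith) (by linarith)
      have e1 : ((x - m) ^ 2 : ℝ) ^ (β / 2) ≤ auxg β m s x := by
        rw [auxg]; exact e0
      have e2 : ((x - m) ^ 2 : ℝ) ^ (β / 2) = (x - m) ^ β := by
        rw [show ((x - m) ^ 2 : ℝ) = (x - m) ^ ((2:ℕ):ℝ) from (Real.rpow_natCast (x - m) 2).symm, ← Real.rpow_mul hz0.le]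
        norm_num
        rw [show (2:ℝ) * (β / 2) = β by ring]
      linarith
    have h3 : (x - m) ^ β = (x - m) ^ (β - 1) * (x - m) := by
      have h := Real.rpow_add_one hz0.ne' (β - 1)
      rw [show β - 1 + 1 = β by ring] at h
      rw [h]
    have h4 : L / ε * (x - m) ≤ (x - m) ^ (β - 1) * (x - m) := by
      apply mul_le_mul_of_nonneg_right _ hz0.le
      calc L / ε ≤ T ^ (β - 1) := hTpow
        _ ≤ (x - m) ^ (β - 1) := Real.rpow_le_rpow (by linarith) hzT (by linarith)
    have h5 : L * (x - m) ≤ ε * auxg β m s x := by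
      have hstep : ε * (L / ε * (x - m)) ≤ ε * auxg β m s x := by
        apply mul_le_mul_of_nonneg_left _ hε.le
        calc L / ε * (x - m) ≤ (x - m) ^ (β - 1) * (x - m) := h4
          _ = (x - m) ^ β := h3.symm
          _ ≤ auxg β m s x := h12
      have heq : ε * (L / ε * (x - m)) = L * (x - m) := by field_simp
      linarith [heq ▸ hstep]
    have h6 : L * x ≤ L * (x - m) := by
      apply mul_le_mul_of_nonneg_left _ hL.le
      rw [hmdef]
      have : 0 < p / a := div_pos hp ha
      linarith
    have h7 : 0 ≤ (L - c₁ - 1) * x := mul_nonneg (by linarith) hx0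
    linarith

lemma key_comparison
    (p lam d r a : ℝ) (hp : 0 < p) (hlam : 0 < lam) (hd : 0 < d)
    (hr : 0 < r) (hra : r < a)
    (mu : Measure ℝ) [IsProbabilityMeasure mu]
    (b₀ : ℝ) (hb₀ : -(p / a) < b₀)
    (ubar usub : ℝ → ℝ)
    (hub_nonneg : ∀ x ∈ Set.Ici (-(p / a)), 0 ≤ ubar x)
    (hub_cont : ContinuousOn ubar (Set.Ici (-(p / a))))
    (hus_cont : ContinuousOn usub (Set.Ici (-(p / a))))
    (c₁ c₂ : ℝ) (hus_growth : ∀ x : ℝ, -(p / a) ≤ x → usub x ≤ c₁ * x + c₂)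
    (hsuper : IsViscSupersol p lam d r a mu ubar (Set.Ioi b₀))
    (hsub : IsViscSubsol p lam d r a mu usub (Set.Ioi b₀))
    (hinit : ∀ x ∈ Set.Icc (-(p / a)) b₀, usub x ≤ ubar x)
    (g gd : ℝ → ℝ)
    (hgC : ContDiff ℝ 1 g)
    (hgd : ∀ x, HasDerivAt g (gd x) x)
    (hgd_pos : ∀ x, -(p / a) ≤ x → 0 < gd x)
    (hg_nonneg : ∀ x, 0 ≤ g x)
    (hg_mono : ∀ x' x : ℝ, -(p / a) ≤ x' → x' ≤ x → g x' ≤ g x)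
    (hdesign : ∀ x, -(p / a) ≤ x → drift p r a x * gd x ≤ d * g x)
    (hgrow : ∀ C ε : ℝ, 0 < ε → ∃ R, 0 ≤ R ∧ ∀ x, R ≤ x → c₁ * x + c₂ - ε * g x < C)
    (γ η ε : ℝ) (hγ : 0 < γ) (hη : 0 < η) (hε : 0 < ε)
    (Hη : ∀ z w : ℝ, -(p / a) ≤ z → z ≤ b₀ → -(p / a) ≤ w → |w - z| ≤ 2 * γ →
      ubar z - ubar w ≤ η) :
    ∀ x, -(p / a) ≤ x → usub x - ubar (x + γ) - ε * g x ≤ η := by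
  have ha : 0 < a := hr.trans hra
  have hpa : 0 < p / a := div_pos hp ha
  by_contra hcon
  push_neg at hcon
  obtain ⟨x₁, hx₁, hV⟩ := hcon
  set V₀ : ℝ := usub x₁ - ubar (x₁ + γ) - ε * g x₁ with hV₀def
  have hVpos : 0 < V₀ := hη.trans hV
  have hx₁γ : -(p / a) ≤ x₁ + γ := by linarith
  have hVle : V₀ ≤ usub x₁ := by
    have h1 := hub_nonneg _ (mem_Ici.mpr hx₁γ)
    have h2 := mul_nonneg hε.le (hg_nonneg x₁)
    rw [hV₀def]; linarith
  clear_value V₀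
  -- coercivity radius
  obtain ⟨R, hR0, hRprop⟩ := hgrow V₀ ε hε
  have hx₁R : x₁ ≤ R := by
    by_contra hcc
    push_neg at hcc
    have h1 := hRprop x₁ hcc.le
    have h2 := hus_growth x₁ hx₁
    have h3 := hub_nonneg _ (mem_Ici.mpr hx₁γ)
    rw [hV₀def] at h1
    linarith
  have hqR : -(p / a) ≤ R := le_trans (by linarith) hR0
  -- maximum of usub on the compact box
  obtain ⟨xM, hxM, hxMmax⟩ :=
    (isCompact_Icc : IsCompact (Icc (-(p / a)) R)).exists_isMaxOn ⟨x₁, hx₁, hx₁R⟩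
      (hus_cont.mono Icc_subset_Ici_self)
  set CR : ℝ := usub xM with hCRdef
  have hCRmax : ∀ y ∈ Icc (-(p / a)) R, usub y ≤ CR := fun y hy => hxMmax hy
  clear_value CR
  have hCRV : V₀ ≤ CR := le_trans hVle (hCRmax x₁ ⟨hx₁, hx₁R⟩)
  -- Y and N
  set Y : ℝ := R + γ + Real.sqrt (CR - V₀ + 1) with hYdef
  have hsqY : Real.sqrt (CR - V₀ + 1) ^ 2 = CR - V₀ + 1 := Real.sq_sqrt (by linarith)
  have hsqY0 : 0 ≤ Real.sqrt (CR - V₀ + 1) := Real.sqrt_nonneg _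
  have hYeq : Y = R + γ + Real.sqrt (CR - V₀ + 1) := hYdef
  clear_value Y
  set N : ℝ := max 1 ((CR - V₀) / γ ^ 2 + 1) with hNdef
  have hN1 : 1 ≤ N := le_max_left _ _
  have hN0 : 0 < N := by linarith
  have hNγ : CR - V₀ < N * γ ^ 2 := by
    have h1 : (CR - V₀) / γ ^ 2 + 1 ≤ N := le_max_right _ _
    have hγ2 : 0 < γ ^ 2 := by positivity
    have h2 := mul_le_mul_of_nonneg_right h1 hγ2.le
    have heq : ((CR - V₀) / γ ^ 2 + 1) * γ ^ 2 = (CR - V₀) + γ ^ 2 := by field_simp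
    nlinarith
  clear_value N
  have hYx₁ : x₁ + γ ≤ Y := by rw [hYeq]; linarith
  have hqY : -(p / a) ≤ Y := le_trans (by linarith) hYx₁
  -- the doubled functional and its maximum point
  have hK : IsCompact (Icc (-(p / a)) R ×ˢ Icc (-(p / a)) Y) := isCompact_Icc.prod isCompact_Icc
  have hKne : (Icc (-(p / a)) R ×ˢ Icc (-(p / a)) Y).Nonempty :=
    ⟨(x₁, x₁ + γ), ⟨⟨hx₁, hx₁R⟩, ⟨hx₁γ, hYx₁⟩⟩⟩
  have hΦcont : ContinuousOn
      (fun z : ℝ × ℝ => usub z.1 - ubar z.2 - N * (z.1 - z.2 + γ) ^ 2 - ε * g z.1)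
      (Icc (-(p / a)) R ×ˢ Icc (-(p / a)) Y) := by
    have h1 : ContinuousOn (fun z : ℝ × ℝ => usub z.1) (Icc (-(p / a)) R ×ˢ Icc (-(p / a)) Y) := by
      apply hus_cont.comp continuous_fst.continuousOn
      intro z hz
      exact hz.1.1
    have h2 : ContinuousOn (fun z : ℝ × ℝ => ubar z.2) (Icc (-(p / a)) R ×ˢ Icc (-(p / a)) Y) := by
      apply hub_cont.comp continuous_snd.continuousOn
      intro z hz
      exact hz.2.1
    have h3 : Continuous (fun z : ℝ × ℝ => N * (z.1 - z.2 + γ) ^ 2) := by fun_prop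
    have h4 : Continuous (fun z : ℝ × ℝ => ε * g z.1) :=
      continuous_const.mul (hgC.continuous.comp continuous_fst)
    exact ((h1.sub h2).sub h3.continuousOn).sub h4.continuousOn
  obtain ⟨z₀, hz₀K, hz₀max⟩ := hK.exists_isMaxOn hKne hΦcont
  obtain ⟨X, Yy⟩ := z₀
  have hXq : -(p / a) ≤ X := hz₀K.1.1
  have hXR : X ≤ R := hz₀K.1.2
  have hYq : -(p / a) ≤ Yy := hz₀K.2.1
  have hmax' : ∀ x' y' : ℝ, x' ∈ Icc (-(p / a)) R → y' ∈ Icc (-(p / a)) Y →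
      usub x' - ubar y' - N * (x' - y' + γ) ^ 2 - ε * g x'
        ≤ usub X - ubar Yy - N * (X - Yy + γ) ^ 2 - ε * g X := by
    intro x' y' h1 h2
    have h := hz₀max (show (x', y') ∈ Icc (-(p / a)) R ×ˢ Icc (-(p / a)) Y from ⟨h1, h2⟩)
    simpa using h
  clear hz₀max hz₀K hΦcont hKne hK
  have hSV : V₀ ≤ usub X - ubar Yy - N * (X - Yy + γ) ^ 2 - ε * g X := by
    have h := hmax' x₁ (x₁ + γ) ⟨hx₁, hx₁R⟩ ⟨hx₁γ, hYx₁⟩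
    have heq : usub x₁ - ubar (x₁ + γ) - N * (x₁ - (x₁ + γ) + γ) ^ 2 - ε * g x₁ = V₀ := by
      rw [hV₀def]; ring_nf
    linarith [heq ▸ h]
  -- global maximality
  have hglob : ∀ x' y' : ℝ, -(p / a) ≤ x' → -(p / a) ≤ y' →
      usub x' - ubar y' - N * (x' - y' + γ) ^ 2 - ε * g x'
        ≤ usub X - ubar Yy - N * (X - Yy + γ) ^ 2 - ε * g X := by
    intro x' y' hx' hy'
    by_cases hxR' : x' ≤ R
    · by_cases hyY' : y' ≤ Y
      · exact hmax' x' y' ⟨hx', hxR'⟩ ⟨hy', hyY'⟩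
      · push_neg at hyY'
        have h1 : usub x' ≤ CR := hCRmax x' ⟨hx', hxR'⟩
        have h2 : 0 ≤ ubar y' := hub_nonneg y' hy'
        have h3 : 0 ≤ ε * g x' := mul_nonneg hε.le (hg_nonneg x')
        have h4 : Real.sqrt (CR - V₀ + 1) ≤ y' - x' - γ := by
          rw [hYeq] at hyY'; linarith
        have h5 : CR - V₀ + 1 ≤ (y' - x' - γ) ^ 2 := by
          rw [← hsqY]; exact pow_le_pow_left₀ hsqY0 h4 2
        have h6 : (y' - x' - γ) ^ 2 ≤ N * (x' - y' + γ) ^ 2 := by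
          have e : (x' - y' + γ) ^ 2 = (y' - x' - γ) ^ 2 := by ring
          rw [e]
          have := mul_le_mul_of_nonneg_right hN1 (sq_nonneg (y' - x' - γ))
          linarith
        linarith
    · push_neg at hxR'
      have h1 := hRprop x' hxR'.le
      have h2 := hus_growth x' hx'
      have h3 : 0 ≤ ubar y' := hub_nonneg y' hy'
      have h4 : 0 ≤ N * (x' - y' + γ) ^ 2 := mul_nonneg hN0.le (sq_nonneg _)
      linarith
  clear hmax'
  -- basic facts about the max point
  have hNρ : N * (X - Yy + γ) ^ 2 ≤ CR - V₀ := by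
    have h1 : usub X ≤ CR := hCRmax X ⟨hXq, hXR⟩
    have h2 : 0 ≤ ubar Yy := hub_nonneg Yy hYq
    have h3 : 0 ≤ ε * g X := mul_nonneg hε.le (hg_nonneg X)
    linarith
  have hρsq : (X - Yy + γ) ^ 2 < γ ^ 2 := by
    have h2 : N * (X - Yy + γ) ^ 2 < N * γ ^ 2 := lt_of_le_of_lt hNρ hNγ
    exact lt_of_mul_lt_mul_left h2 hN0.le
  have hρabs : |X - Yy + γ| < γ := abs_lt_of_sq_lt_sq hρsq hγ.le
  have hρup : X - Yy + γ < γ := (abs_lt.mp hρabs).2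
  have hρlo : -γ < X - Yy + γ := (abs_lt.mp hρabs).1
  have hXYy : X ≤ Yy := by linarith
  have hXb : b₀ < X := by
    by_contra hcc
    push_neg at hcc
    have h1 : usub X ≤ ubar X := hinit X ⟨hXq, hcc⟩
    have h2 : |Yy - X| ≤ 2 * γ := abs_le.mpr ⟨by linarith, by linarith⟩
    have h3 := Hη X Yy hXq hcc hYq h2
    have h4 : 0 ≤ N * (X - Yy + γ) ^ 2 := mul_nonneg hN0.le (sq_nonneg _)
    have h5 : 0 ≤ ε * g X := mul_nonneg hε.le (hg_nonneg X)
    linarith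
  have hYb : b₀ < Yy := lt_of_lt_of_le hXb hXYy
  -- apply the supersolution property at Yy with test function ψ
  have hψd : HasDerivAt (fun y : ℝ => ubar Yy + N * (X - Yy + γ) ^ 2 - N * (X - y + γ) ^ 2)
      (2 * N * (X - Yy + γ)) Yy := by
    have h0 : HasDerivAt (fun y : ℝ => X - y + γ) (-1) Yy := by
      simpa using ((hasDerivAt_id Yy).const_sub X).add_const γ
    have h1 := h0.pow 2
    have h2 := (hasDerivAt_const Yy (ubar Yy + N * (X - Yy + γ) ^ 2)).sub (h1.const_mul N)
    refine h2.congr_deriv ?_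
    push_cast
    ring
  have hCψ : ContDiff ℝ 1 (fun y : ℝ => ubar Yy + N * (X - Yy + γ) ^ 2 - N * (X - y + γ) ^ 2) := by
    apply ContDiff.sub contDiff_const
    exact contDiff_const.mul (((contDiff_const.sub contDiff_id).add contDiff_const).pow 2)
  have hψtouch : ∀ y ∈ Ici (-(p / a)),
      ubar Yy - (ubar Yy + N * (X - Yy + γ) ^ 2 - N * (X - Yy + γ) ^ 2)
        ≤ ubar y - (ubar Yy + N * (X - Yy + γ) ^ 2 - N * (X - y + γ) ^ 2) := by
    intro y hy
    have h := hglob X y hXq hy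
    linarith
  have hsupRes := hsuper Yy (mem_Ioi.mpr hYb)
      (fun y : ℝ => ubar Yy + N * (X - Yy + γ) ^ 2 - N * (X - y + γ) ^ 2) hCψ
      (by show ubar Yy + N * (X - Yy + γ) ^ 2 - N * (X - Yy + γ) ^ 2 = ubar Yy; ring)
      hψtouch
  rw [max_le_iff] at hsupRes
  obtain ⟨hsup1, hsup2⟩ := hsupRes
  rw [hψd.deriv] at hsup1
  unfold Lphi at hsup2
  rw [hψd.deriv] at hsup2
  have hρ1 : 1 ≤ 2 * N * (X - Yy + γ) := by linarith
  -- apply the subsolution property at X with test function φ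
  have hφd : HasDerivAt
      (fun x : ℝ => usub X - N * (X - Yy + γ) ^ 2 - ε * g X + (N * (x - Yy + γ) ^ 2 + ε * g x))
      (2 * N * (X - Yy + γ) + ε * gd X) X := by
    have h0 : HasDerivAt (fun x : ℝ => x - Yy + γ) 1 X := by
      simpa using ((hasDerivAt_id X).sub_const Yy).add_const γ
    have h1 := h0.pow 2
    have h2 := (h1.const_mul N).add ((hgd X).const_mul ε)
    have h3 := (hasDerivAt_const X (usub X - N * (X - Yy + γ) ^ 2 - ε * g X)).add h2
    refine h3.congr_deriv ?_
    push_cast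
    ring
  have hCφ : ContDiff ℝ 1
      (fun x : ℝ => usub X - N * (X - Yy + γ) ^ 2 - ε * g X + (N * (x - Yy + γ) ^ 2 + ε * g x)) := by
    apply ContDiff.add contDiff_const
    apply ContDiff.add
    · exact contDiff_const.mul (((contDiff_id.sub contDiff_const).add contDiff_const).pow 2)
    · exact contDiff_const.mul hgC
  have hφtouch : ∀ y ∈ Ici (-(p / a)),
      usub y - (usub X - N * (X - Yy + γ) ^ 2 - ε * g X + (N * (y - Yy + γ) ^ 2 + ε * g y))
        ≤ usub X - (usub X - N * (X - Yy + γ) ^ 2 - ε * g X + (N * (X - Yy + γ) ^ 2 + ε * g X)) := by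
    intro y hy
    have h := hglob y Yy hy hYq
    linarith
  have hsubRes := hsub X (mem_Ioi.mpr hXb)
      (fun x : ℝ => usub X - N * (X - Yy + γ) ^ 2 - ε * g X + (N * (x - Yy + γ) ^ 2 + ε * g x)) hCφ
      (by show usub X - N * (X - Yy + γ) ^ 2 - ε * g X + (N * (X - Yy + γ) ^ 2 + ε * g X) = usub X
          ring)
      hφtouch
  have hgdX : 0 < gd X := hgd_pos X hXq
  have hsub2 : 0 ≤ drift p r a X * (2 * N * (X - Yy + γ) + ε * gd X) - (lam + d) * usub X
      + lam * Iop p a mu usub X := by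
    rcases le_max_iff.mp hsubRes with h | h
    · exfalso
      rw [hφd.deriv] at h
      have := mul_pos hε hgdX
      linarith
    · unfold Lphi at h
      rw [hφd.deriv] at h
      exact h
  clear hsubRes hφtouch hCφ hφd hψtouch hCψ hψd hsup1
  -- integral estimates
  have hXpa : 0 ≤ X + p / a := by linarith
  have hEXY : X + p / a ≤ Yy + p / a := by linarith
  have hcont1 : ContinuousOn (fun u : ℝ => usub (X - u)) (Icc 0 (X + p / a)) := by
    have hmap : MapsTo (fun u : ℝ => X - u) (Icc 0 (X + p / a)) (Ici (-(p / a))) := by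
      intro u hu
      simp only [mem_Ici]
      linarith [hu.2]
    have := hus_cont.comp (Continuous.continuousOn (continuous_const.sub continuous_id)) hmap
    exact this
  have hint1 : IntegrableOn (fun u : ℝ => usub (X - u)) (Ioc 0 (X + p / a)) mu :=
    (hcont1.integrableOn_compact isCompact_Icc).mono_set Ioc_subset_Icc_self
  have hcont2 : ContinuousOn (fun u : ℝ => ubar (Yy - u)) (Icc 0 (Yy + p / a)) := by
    have hmap : MapsTo (fun u : ℝ => Yy - u) (Icc 0 (Yy + p / a)) (Ici (-(p / a))) := by
      intro u hu
      simp only [mem_Ici]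
      linarith [hu.2]
    have := hub_cont.comp (Continuous.continuousOn (continuous_const.sub continuous_id)) hmap
    exact this
  have hint2 : IntegrableOn (fun u : ℝ => ubar (Yy - u)) (Ioc 0 (Yy + p / a)) mu :=
    (hcont2.integrableOn_compact isCompact_Icc).mono_set Ioc_subset_Icc_self
  have hint2X : IntegrableOn (fun u : ℝ => ubar (Yy - u)) (Ioc 0 (X + p / a)) mu :=
    hint2.mono_set (Ioc_subset_Ioc le_rfl hEXY)
  have hgap0 : 0 < usub X - ubar Yy := by
    have h4 : 0 ≤ N * (X - Yy + γ) ^ 2 := mul_nonneg hN0.le (sq_nonneg _)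
    have h5 : 0 ≤ ε * g X := mul_nonneg hε.le (hg_nonneg X)
    linarith
  have hpt : ∀ u ∈ Ioc (0:ℝ) (X + p / a), usub (X - u) ≤ (usub X - ubar Yy) + ubar (Yy - u) := by
    intro u hu
    obtain ⟨hu1, hu2⟩ := hu
    have hXu : -(p / a) ≤ X - u := by linarith
    have hYu : -(p / a) ≤ Yy - u := by linarith
    have h := hglob (X - u) (Yy - u) hXu hYu
    have hpen : (X - u - (Yy - u) + γ) = (X - Yy + γ) := by ring
    rw [hpen] at h
    have hgm : ε * g (X - u) ≤ ε * g X :=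
      mul_le_mul_of_nonneg_left (hg_mono (X - u) X hXu (by linarith)) hε.le
    linarith
  have hintc : IntegrableOn (fun _ : ℝ => usub X - ubar Yy) (Ioc (0:ℝ) (X + p / a)) mu :=
    (integrableOn_const_iff).mpr (Or.inr (measure_lt_top _ _))
  have step1 : (∫ u in Ioc (0:ℝ) (X + p / a), usub (X - u) ∂mu)
      ≤ ∫ u in Ioc (0:ℝ) (X + p / a), ((usub X - ubar Yy) + ubar (Yy - u)) ∂mu :=
    setIntegral_mono_on hint1 (hintc.add hint2X) measurableSet_Ioc hpt
  have step2 : (∫ u in Ioc (0:ℝ) (X + p / a), ((usub X - ubar Yy) + ubar (Yy - u)) ∂mu)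
      = (mu (Ioc (0:ℝ) (X + p / a))).toReal * (usub X - ubar Yy)
        + ∫ u in Ioc (0:ℝ) (X + p / a), ubar (Yy - u) ∂mu := by
    rw [integral_add hintc hint2X, setIntegral_const, smul_eq_mul, Measure.real]
  have step3 : (mu (Ioc (0:ℝ) (X + p / a))).toReal * (usub X - ubar Yy) ≤ usub X - ubar Yy := by
    have h1 : (mu (Ioc (0:ℝ) (X + p / a))).toReal ≤ 1 := by
      have h2 : mu (Ioc (0:ℝ) (X + p / a)) ≤ 1 := prob_le_one
      simpa using ENNReal.toReal_mono ENNReal.one_ne_top h2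
    have h3 := mul_le_mul_of_nonneg_right h1 hgap0.le
    linarith
  have step4 : (∫ u in Ioc (0:ℝ) (X + p / a), ubar (Yy - u) ∂mu)
      ≤ ∫ u in Ioc (0:ℝ) (Yy + p / a), ubar (Yy - u) ∂mu := by
    apply setIntegral_mono_set hint2
    · refine (ae_restrict_iff' measurableSet_Ioc).mpr (ae_of_all _ ?_)
      intro u hu
      simpa using hub_nonneg (Yy - u) (by simp only [mem_Ici]; linarith [hu.2])
    · exact (Ioc_subset_Ioc le_rfl hEXY).eventuallyLE
  have hIbound : Iop p a mu usub X ≤ (usub X - ubar Yy) + Iop p a mu ubar Yy := by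
    unfold Iop
    linarith
  -- final contradiction
  have hdXY : drift p r a X ≤ drift p r a Yy := drift_mono p r a hr ha hXYy
  have t1 : drift p r a X * (2 * N * (X - Yy + γ)) ≤ drift p r a Yy * (2 * N * (X - Yy + γ)) :=
    mul_le_mul_of_nonneg_right hdXY (by linarith)
  have t2 : drift p r a X * gd X ≤ d * g X := hdesign X hXq
  have t2' : ε * (drift p r a X * gd X) ≤ ε * (d * g X) := mul_le_mul_of_nonneg_left t2 hε.le
  have t3 : lam * Iop p a mu usub X ≤ lam * ((usub X - ubar Yy) + Iop p a mu ubar Yy) :=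
    mul_le_mul_of_nonneg_left hIbound hlam.le
  have hexp : drift p r a X * (2 * N * (X - Yy + γ) + ε * gd X)
      = drift p r a X * (2 * N * (X - Yy + γ)) + ε * (drift p r a X * gd X) := by ring
  rw [hexp] at hsub2
  have hdgap : d * (usub X - ubar Yy) ≤ d * (ε * g X) := by linarith
  have hgapεg : usub X - ubar Yy ≤ ε * g X := le_of_mul_le_mul_left hdgap hd
  have hfin : 0 ≤ N * (X - Yy + γ) ^ 2 := mul_nonneg hN0.le (sq_nonneg _)
  linarith

theorem stmt1
    (p lam d r a : ℝ) (hp : 0 < p) (hlam : 0 < lam) (hd : 0 < d)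
    (hr : 0 < r) (hra : r < a) (hrd : r < d)
    (mu : Measure ℝ) [IsProbabilityMeasure mu] (hmu : mu (Set.Iic 0) = 0)
    (b₀ : ℝ) (hb₀ : -(p / a) < b₀)
    (ubar usub : ℝ → ℝ)
    (hub_nonneg : ∀ x ∈ Set.Ici (-(p / a)), 0 ≤ ubar x)
    (hus_nonneg : ∀ x ∈ Set.Ici (-(p / a)), 0 ≤ usub x)
    (hub_cont : ContinuousOn ubar (Set.Ici (-(p / a))))
    (hus_cont : ContinuousOn usub (Set.Ici (-(p / a))))
    (hub_lip : LocLipOn (Set.Ioi (-(p / a))) ubar)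
    (hus_lip : LocLipOn (Set.Ioi (-(p / a))) usub)
    (hub_growth : LinGrowth p a ubar) (hus_growth : LinGrowth p a usub)
    (hsuper : IsViscSupersol p lam d r a mu ubar (Set.Ioi b₀))
    (hsub : IsViscSubsol p lam d r a mu usub (Set.Ioi b₀))
    (hinit : ∀ x ∈ Set.Icc (-(p / a)) b₀, usub x ≤ ubar x) :
    ∀ x : ℝ, -(p / a) ≤ x → usub x ≤ ubar x := by
  have ha : 0 < a := hr.trans hra
  obtain ⟨c₁, c₂, hgrowth⟩ := hus_growth
  obtain ⟨g, gd, hgC, hgd, hgd_pos, hg_nonneg, hg_mono, hdesign, hgrow⟩ :=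
    exists_g p r a d hp hr ha hrd
  intro x hx
  refine le_of_forall_pos_le_add ?_
  intro η hη
  -- uniform continuity of ubar on a compact window
  have hbb : -(p / a) ≤ b₀ + 2 := by linarith
  have huc := (isCompact_Icc : IsCompact (Icc (-(p / a)) (b₀ + 2))).uniformContinuousOn_of_continuous
    (hub_cont.mono Icc_subset_Ici_self)
  rw [Metric.uniformContinuousOn_iff] at huc
  obtain ⟨δ₀, hδ₀, hδprop⟩ := huc η hη
  set γ₀ : ℝ := min 1 (δ₀ / 4) with hγ₀def
  have hγ₀pos : 0 < γ₀ := lt_min one_pos (by linarith)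
  have hγ₀le1 : γ₀ ≤ 1 := min_le_left _ _
  have hγ₀leδ : γ₀ ≤ δ₀ / 4 := min_le_right _ _
  clear_value γ₀
  -- for every small γ, usub x ≤ ubar (x + γ) + η
  have hstep : ∀ γ : ℝ, 0 < γ → γ ≤ γ₀ → usub x ≤ ubar (x + γ) + η := by
    intro γ hγp hγle
    have HH : ∀ z w : ℝ, -(p / a) ≤ z → z ≤ b₀ → -(p / a) ≤ w → |w - z| ≤ 2 * γ →
        ubar z - ubar w ≤ η := by
      intro z w hz hzb hw hzw
      have hwz : w - z ≤ 2 * γ := le_trans (le_abs_self _) hzw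
      have hzD : z ∈ Icc (-(p / a)) (b₀ + 2) := ⟨hz, by linarith⟩
      have hwD : w ∈ Icc (-(p / a)) (b₀ + 2) := ⟨hw, by linarith⟩
      have hdist : dist z w < δ₀ := by
        rw [Real.dist_eq, abs_sub_comm]
        calc |w - z| ≤ 2 * γ := hzw
          _ ≤ 2 * γ₀ := by linarith
          _ < δ₀ := by linarith
      have h := hδprop z hzD w hwD hdist
      rw [Real.dist_eq] at h
      exact le_of_lt (lt_of_le_of_lt (le_abs_self _) h)
    have hεstep : ∀ ε' : ℝ, 0 < ε' → usub x ≤ ubar (x + γ) + η + ε' := by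
      intro ε' hε'p
      have hgx1 : (0:ℝ) < g x + 1 := by have := hg_nonneg x; linarith
      have hεc : 0 < ε' / (g x + 1) := by positivity
      have hk := key_comparison p lam d r a hp hlam hd hr hra mu b₀ hb₀ ubar usub
        hub_nonneg hub_cont hus_cont c₁ c₂ hgrowth hsuper hsub hinit g gd hgC hgd
        hgd_pos hg_nonneg hg_mono hdesign (fun C ε hε => hgrow c₁ c₂ C ε hε)
        γ η (ε' / (g x + 1)) hγp hη hεc HH x hx
      have hb : ε' / (g x + 1) * g x ≤ ε' := by
        rw [div_mul_eq_mul_div, div_le_iff₀ hgx1]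
        nlinarith [hg_nonneg x]
      linarith
    exact le_of_forall_pos_le_add hεstep
  -- let γ → 0 along the sequence γ₀ / (n + 1)
  have hseq : Tendsto (fun n : ℕ => ubar (x + γ₀ / (n + 1)) + η) atTop (nhds (ubar x + η)) := by
    have h1 : Tendsto (fun n : ℕ => x + γ₀ / (n + 1)) atTop (nhds x) := by
      have h2 : Tendsto (fun n : ℕ => γ₀ * (1 / ((n:ℝ) + 1))) atTop (nhds (γ₀ * 0)) :=
        tendsto_const_nhds.mul tendsto_one_div_add_atTop_nhds_zero_nat
      have h3 : Tendsto (fun n : ℕ => x + γ₀ * (1 / ((n:ℝ) + 1))) atTop (nhds (x + γ₀ * 0)) :=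
        tendsto_const_nhds.add h2
      simpa [mul_one_div, div_eq_mul_inv] using h3
    have hcw : ContinuousWithinAt ubar (Ici (-(p / a))) x := hub_cont x (mem_Ici.mpr hx)
    have h4 : Tendsto (fun n : ℕ => ubar (x + γ₀ / (n + 1))) atTop (nhds (ubar x)) := by
      apply hcw.tendsto.comp
      rw [tendsto_nhdsWithin_iff]
      refine ⟨h1, Eventually.of_forall fun n => ?_⟩
      have hpos : 0 < γ₀ / ((n:ℝ) + 1) := by positivity
      simp only [mem_Ici]
      linarith
    exact h4.add tendsto_const_nhds
  refine ge_of_tendsto' hseq fun n => ?_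
  have hpos : 0 < γ₀ / ((n:ℝ) + 1) := by positivity
  exact hstep (γ₀ / (n + 1)) hpos (div_le_self hγ₀pos.le (by norm_num))
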